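/- Let M = ⟨S, A, T, s0⟩ be an nrMDP, λ : A × S → Z a labeling function, R = ⟨U, u0, Z, δ_u, δ_r, c⟩ a Mealy reward machine, and P = M ⊗_λ R their synchronized product. The map sending a strategy π of M (a function from the set of histories of M to A) to the strategy π⊗ of P defined by π⊗(B(σh)) = π(σh) for every history σh of M is well defined and is a bijection between the set of strategies of M and the set of strategies of P. -/

import Mathlib

open MeasureTheory Filter

attribute [local instance] Classical.propDecidable

/-- A non-rewarding Markov decision process over finite state set `S` and
finite action set `A`. -/
structure NRMDP (S A : Type) [Fintype S] [Fintype A] where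
  T : S → A → S → ℝ
  T_nonneg : ∀ s a s', 0 ≤ T s a s'
  T_le_one : ∀ s a s', T s a s' ≤ 1
  T_sum_one : ∀ s a, ∑ s', T s a s' = 1
  s0 : S

/-- A Mealy reward machine over the finite observation set `Z` with
distinguished observation `null`. -/
structure MRM (U Z : Type) [Fintype U] [Fintype Z] (null : Z) where
  u0 : U
  δu : U → Z → U
  δr : U → Z → ℝ
  c : ℝ
  δu_null : ∀ u, δu u null = u
  δr_null : ∀ u, δr u null = c

variable {S A U Z St Ac : Type}

/-- `ValidFrom T s steps` : the alternating sequence starting at `s` whose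
successive (action, next-state) steps are `steps` has positive transition
probability at every step. -/
def ValidFrom (T : St → Ac → St → ℝ) : St → List (Ac × St) → Prop
  | _, [] => True
  | s, step :: rest => 0 < T s step.1 step.2 ∧ ValidFrom T step.2 rest

/-- Transition function of the synchronized product `M ⊗_λ R`. -/
noncomputable def prodT (T : S → A → S → ℝ) (lab : A → S → Z) (δu : U → Z → U) :
    S × U → A → S × U → ℝ :=
  fun p a q => if q.2 = δu p.2 (lab a q.1) then T p.1 a q.1 else 0

/-- The map `B` (on the step list of a history), lifting a history of `M`
to a history of the synchronized product by tracking the MRM node. -/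
def liftHist (lab : A → S → Z) (δu : U → Z → U) : U → List (A × S) → List (A × (S × U))
  | _, [] => []
  | u, (a, s') :: rest =>
      (a, (s', δu u (lab a s'))) :: liftHist lab δu (δu u (lab a s')) rest

/-- The set of histories of an MDP with transition function `T` and initial
state `s0`, as a subtype of step lists. -/
def Hist (T : St → Ac → St → ℝ) (s0 : St) : Type := {h : List (Ac × St) // ValidFrom T s0 h}

def projHist {S A U : Type} : List (A × (S × U)) → List (A × S) :=
  fun l => l.map (fun p => (p.1, p.2.1))

theorem proj_liftHist {S A U Z : Type} (lab : A → S → Z) (δu : U → Z → U) :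
    ∀ (l : List (A × S)) (u : U), projHist (liftHist lab δu u l) = l := by
  intro l
  induction l with
  | nil => intro u; rfl
  | cons hd tl ih =>
    intro u
    obtain ⟨a, s⟩ := hd
    simp [liftHist, projHist] at ih ⊢
    exact ih _

theorem valid_proj {S A U Z : Type} (T : S → A → S → ℝ) (lab : A → S → Z)
    (δu : U → Z → U) :
    ∀ (l : List (A × (S × U))) (s : S) (u : U),
      ValidFrom (prodT T lab δu) (s, u) l →
        ValidFrom T s (projHist l) ∧ liftHist lab δu u (projHist l) = l := by
  intro l
  induction l with
  | nil => intro s u _; exact ⟨trivial, rfl⟩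
  | cons hd tl ih =>
    intro s u hv
    obtain ⟨a, s', u'⟩ := hd
    obtain ⟨hpos, hrest⟩ := hv
    have hu' : u' = δu u (lab a s') := by
      by_contra h
      simp [prodT, h] at hpos
    have hT : 0 < T s a s' := by
      simpa [prodT, hu'] using hpos
    obtain ⟨h1, h2⟩ := ih s' u' hrest
    subst hu'
    exact ⟨⟨hT, h1⟩, by simp [projHist, liftHist] at h2 ⊢; exact h2⟩

/-- For any map `B` from histories of `M` to histories of
`P = M ⊗_λ R` acting as `liftHist` (i.e. the map `B` of the paper), the map
sending a strategy `π` of `M` to the strategy `π⊗` of `P` determined by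
`π⊗(B(σh)) = π(σh)` is well defined (it exists and is unique) and is a
bijection between the strategies of `M` and the strategies of `P`. -/
theorem strategy_correspondence_bijective
    [Fintype S] [Fintype A] [Fintype U] [Fintype Z]
    (M : NRMDP S A) (null : Z) (lab : A → S → Z) (R : MRM U Z null)
    (B : Hist M.T M.s0 → Hist (prodT M.T lab R.δu) ((M.s0 : S), (R.u0 : U)))
    (hB : ∀ h : Hist M.T M.s0, (B h).val = liftHist lab R.δu R.u0 h.val) :
    ∃ Φ : (Hist M.T M.s0 → A) → (Hist (prodT M.T lab R.δu) ((M.s0 : S), (R.u0 : U)) → A),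
      (∀ π h, Φ π (B h) = π h) ∧
      Function.Bijective Φ ∧
      (∀ Φ' : (Hist M.T M.s0 → A) →
          (Hist (prodT M.T lab R.δu) ((M.s0 : S), (R.u0 : U)) → A),
        (∀ π h, Φ' π (B h) = π h) → Φ' = Φ) := by

  have hBinj : Function.Injective B := by
    intro h1 h2 he
    apply Subtype.ext
    have := congrArg Subtype.val he
    rw [hB, hB] at this
    have := congrArg (projHist (S := S) (A := A) (U := U)) this
    rwa [proj_liftHist, proj_liftHist] at this
  have hBsurj : Function.Surjective B := by
    intro h'
    obtain ⟨h1, h2⟩ := valid_proj M.T lab R.δu h'.val M.s0 R.u0 h'.property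
    exact ⟨⟨projHist h'.val, h1⟩, Subtype.ext ((hB _).trans h2)⟩
  let e : Hist M.T M.s0 ≃ Hist (prodT M.T lab R.δu) (M.s0, R.u0) :=
    Equiv.ofBijective B ⟨hBinj, hBsurj⟩
  have he : ∀ h, e h = B h := fun h => rfl
  refine ⟨fun π => π ∘ e.symm, ?_, ?_, ?_⟩
  · intro π h
    show π (e.symm (e h)) = π h
    rw [e.symm_apply_apply]
  · constructor
    · intro π1 π2 hp
      funext h
      have := congrFun hp (e h)
      simpa using this
    · intro π'
      exact ⟨π' ∘ e, by funext h'; simp⟩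
  · intro Φ' hΦ'
    funext π h'
    have : B (e.symm h') = h' := e.apply_symm_apply h'
    calc Φ' π h' = Φ' π (B (e.symm h')) := by rw [this]
      _ = π (e.symm h') := hΦ' π _
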